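/- arXiv:1103.2177 — 6 statements merged into one kernel-verified Lean document; each statement's English description precedes it below -/
import Mathlib

section
/- Let a_1, ..., a_n be positive real numbers and σ² ≥ 0. Define c_i = a_i / (Σ_{j≠i} a_j + σ²). Then for any positive integer m, at most m of the c_i can be strictly greater than 1/m. -/
open Finset

theorem sinr_counting (n : ℕ) (a : Fin n → ℝ) (ha : ∀ i, 0 < a i)
    (σ2 : ℝ) (hσ : 0 ≤ σ2) (c : Fin n → ℝ)
    (hc : ∀ i, c i = a i / ((∑ j ∈ Finset.univ.erase i, a j) + σ2))
    (m : ℕ) (hm : 0 < m) :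
    (Finset.univ.filter (fun i => 1 / (m : ℝ) < c i)).card ≤ m := by
  set S := Finset.univ.filter (fun i => 1 / (m : ℝ) < c i) with hS
  by_contra h
  push_neg at h
  -- key: for i ∈ S, m * a i > ∑_{j ≠ i} a j + σ2
  have key : ∀ i ∈ S, (∑ j ∈ S.erase i, a j) < (m : ℝ) * a i := by
    intro i hi
    have hci : 1 / (m : ℝ) < c i := (Finset.mem_filter.mp hi).2
    set D := (∑ j ∈ Finset.univ.erase i, a j) + σ2 with hD
    have hD0 : 0 ≤ D := by
      apply add_nonneg _ hσ
      exact Finset.sum_nonneg fun j _ => (ha j).le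
    have hDpos : 0 < D := by
      rcases hD0.lt_or_eq with h' | h'
      · exact h'
      · exfalso
        rw [hc i] at hci
        rw [← hD, ← h', div_zero] at hci
        have : (0:ℝ) < 1 / (m : ℝ) := by positivity
        linarith
    have hmi : D < (m : ℝ) * a i := by
      rw [hc i] at hci
      rw [← hD, div_lt_div_iff₀ (by positivity) hDpos] at hci
      linarith
    calc (∑ j ∈ S.erase i, a j) ≤ ∑ j ∈ Finset.univ.erase i, a j := by
          apply Finset.sum_le_sum_of_subset_of_nonneg
          · exact Finset.erase_subset_erase i (Finset.subset_univ S)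
          · intro j _ _; exact (ha j).le
      _ ≤ D := by simp [hD]; linarith
      _ < (m:ℝ) * a i := hmi
  have hsum : ∑ i ∈ S, (∑ j ∈ S.erase i, a j) < ∑ i ∈ S, (m : ℝ) * a i := by
    apply Finset.sum_lt_sum_of_nonempty
    · rw [← Finset.card_pos]; omega
    · exact key
  have hid : ∑ i ∈ S, (∑ j ∈ S.erase i, a j)
      = (S.card - 1 : ℝ) * ∑ i ∈ S, a i := by
    have : ∀ i ∈ S, (∑ j ∈ S.erase i, a j) = (∑ j ∈ S, a j) - a i := by
      intro i hi; rw [Finset.sum_erase_eq_sub hi]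
    rw [Finset.sum_congr rfl this, Finset.sum_sub_distrib, Finset.sum_const,
      nsmul_eq_mul]
    ring
  have hpos : 0 < ∑ i ∈ S, a i := by
    apply Finset.sum_pos (fun i _ => ha i)
    rw [← Finset.card_pos]; omega
  have hcard : (m : ℝ) ≤ (S.card - 1 : ℝ) := by
    have : m + 1 ≤ S.card := h
    have := (Nat.cast_le (α := ℝ)).mpr this
    push_cast at this
    linarith
  rw [hid, ← Finset.mul_sum] at hsum
  nlinarith
end

section
/- Let a_1, ..., a_n be positive reals and b_i = a_i / (Σ_{j≠i} a_j). Then at most m of the b_i can be strictly greater than 1/m, for any positive integer m. -/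
open Finset

theorem sir_counting (n : ℕ) (a : Fin n → ℝ) (ha : ∀ i, 0 < a i)
    (b : Fin n → ℝ)
    (hb : ∀ i, b i = a i / (∑ j ∈ Finset.univ.erase i, a j))
    (m : ℕ) (hm : 0 < m) :
    (Finset.univ.filter (fun i => 1 / (m : ℝ) < b i)).card ≤ m := by
  by_contra h
  push_neg at h
  set F := Finset.univ.filter (fun i => 1 / (m : ℝ) < b i) with hF
  set T : ℝ := ∑ j, a j with hT
  have hFne : F.Nonempty := Finset.card_pos.mp (by omega)
  have hTpos : 0 < T := by
    obtain ⟨i, hi⟩ := hFne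
    exact Finset.sum_pos (fun j _ => ha j) ⟨i, Finset.mem_univ i⟩
  have key : ∀ i ∈ F, T / (m + 1) < a i := by
    intro i hi
    have hbi : 1 / (m : ℝ) < b i := (Finset.mem_filter.mp hi).2
    have hsum : ∑ j ∈ Finset.univ.erase i, a j = T - a i :=
      Finset.sum_erase_eq_sub (Finset.mem_univ i)
    rw [hb i, hsum] at hbi
    have hmpos : (0 : ℝ) < 1 / m := by positivity
    have hbpos : 0 < a i / (T - a i) := lt_trans hmpos hbi
    have hden : 0 < T - a i := by
      by_contra hle
      push_neg at hle
      have : a i / (T - a i) ≤ 0 := div_nonpos_of_nonneg_of_nonpos (ha i).le hle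
      linarith
    rw [div_lt_div_iff₀ (by positivity) hden] at hbi
    have : T < (m + 1) * a i := by linarith
    rw [div_lt_iff₀ (by positivity)]
    linarith
  have h1 : ∑ i ∈ F, a i ≤ T :=
    Finset.sum_le_sum_of_subset_of_nonneg (Finset.subset_univ F)
      (fun j _ _ => (ha j).le)
  have h2 : (F.card : ℝ) * (T / (m + 1)) < ∑ i ∈ F, a i := by
    calc (F.card : ℝ) * (T / (m + 1)) = ∑ _i ∈ F, T / (m + 1) := by
          rw [Finset.sum_const, nsmul_eq_mul]
      _ < ∑ i ∈ F, a i := Finset.sum_lt_sum_of_nonempty hFne key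
  have h3 : (m + 1 : ℝ) ≤ (F.card : ℝ) := by exact_mod_cast h
  have h4 : T ≤ (F.card : ℝ) * (T / (m + 1)) := by
    have : (m + 1 : ℝ) * (T / (m + 1)) ≤ (F.card : ℝ) * (T / (m + 1)) := by
      apply mul_le_mul_of_nonneg_right h3
      positivity
    rw [mul_div_cancel₀] at this
    · exact this
    · positivity
  linarith
end

section
/- For α > 2 and s > 0, the integral ∫_0^∞ 2π r (1 − 1/(1 + s·r^{−α})) dr equals s^{2/α} · C(α), where C(α) = 2π² csc(2π/α) / α. -/
open Real MeasureTheory Set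


lemma beta_refl {a : ℝ} (ha : 0 < a) (ha1 : a < 1) :
    ∫ x in (0:ℝ)..1, x ^ (a-1) * (1-x) ^ (-a) = π / Real.sin (π * a) := by
  have h1 : Complex.betaIntegral a (1-a) = ↑(π / Real.sin (π * a)) := by
    have h2 := Complex.Gamma_mul_Gamma_eq_betaIntegral (s := (a:ℂ)) (t := 1 - (a:ℂ))
      (by simpa using ha) (by simp [Complex.sub_re]; linarith)
    rw [add_sub_cancel, Complex.Gamma_one, one_mul] at h2
    rw [← h2, Complex.Gamma_mul_Gamma_one_sub]
    push_cast
    rfl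
  have h3 : Complex.betaIntegral a (1-a)
      = ∫ x in (0:ℝ)..1, ((x ^ (a-1) * (1-x) ^ (-a) : ℝ) : ℂ) := by
    rw [Complex.betaIntegral]
    apply intervalIntegral.integral_congr
    intro x hx
    rw [uIcc_of_le (by norm_num)] at hx
    obtain ⟨hx0, hx1⟩ := hx
    dsimp only
    rw [show ((1:ℂ) - (x:ℂ)) = ((1 - x : ℝ):ℂ) by push_cast; ring,
      show ((a:ℂ)-1) = ((a-1:ℝ):ℂ) by push_cast; ring, show (1 - (a:ℂ) - 1) = ((-a:ℝ):ℂ) by push_cast; ring,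
      ← Complex.ofReal_cpow hx0, ← Complex.ofReal_cpow (by linarith : (0:ℝ) ≤ 1 - x)]
    push_cast
    ring_nf
  rw [h3, intervalIntegral.integral_ofReal] at h1
  exact_mod_cast h1

lemma J_eval {a : ℝ} (ha : 0 < a) (ha1 : a < 1) :
    ∫ t in Ioi (0:ℝ), t ^ (a-1) * (1+t)⁻¹ = π / Real.sin (π * a) := by
  have himg : (fun x : ℝ => x / (1 - x)) '' Ioo 0 1 = Ioi 0 := by
    ext t
    constructor
    · rintro ⟨x, ⟨hx0, hx1⟩, rfl⟩
      exact div_pos hx0 (by linarith)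
    · intro ht
      have ht' : (0:ℝ) < t := ht
      refine ⟨t / (1 + t), ⟨div_pos ht' (by linarith), by
        rw [div_lt_one (by linarith)]; linarith⟩, ?_⟩
      have h1t : (1:ℝ) + t ≠ 0 := by positivity
      field_simp
      ring
  have hderiv : ∀ x ∈ Ioo (0:ℝ) 1, HasDerivWithinAt (fun x : ℝ => x / (1 - x))
      (((1 - x) ^ 2)⁻¹) (Ioo 0 1) x := by
    intro x ⟨hx0, hx1⟩
    have hne : (1:ℝ) - x ≠ 0 := by linarith
    have := (HasDerivAt.div (hasDerivAt_id x) ((hasDerivAt_id x).const_sub 1) hne)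
    refine this.hasDerivWithinAt.congr_deriv ?_
    simp only [id_eq]; rw [inv_eq_one_div]; congr 1; ring
  have hinj : Set.InjOn (fun x : ℝ => x / (1 - x)) (Ioo 0 1) := by
    intro x ⟨hx0, hx1⟩ y ⟨hy0, hy1⟩ hxy
    have hnx : (1:ℝ) - x ≠ 0 := by linarith
    have hny : (1:ℝ) - y ≠ 0 := by linarith
    field_simp at hxy
    linarith
  have key := integral_image_eq_integral_abs_deriv_smul measurableSet_Ioo hderiv hinj
    (fun t => t ^ (a-1) * (1+t)⁻¹)
  rw [himg] at key
  rw [key]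
  have hcongr : ∫ x in Ioo (0:ℝ) 1,
      |((1 - x) ^ 2)⁻¹| • ((x / (1-x)) ^ (a-1) * (1 + x / (1-x))⁻¹)
      = ∫ x in Ioo (0:ℝ) 1, x ^ (a-1) * (1-x) ^ (-a) := by
    apply setIntegral_congr_fun measurableSet_Ioo
    intro x ⟨hx0, hx1⟩
    have h1x : (0:ℝ) < 1 - x := by linarith
    have hne : (1:ℝ) - x ≠ 0 := h1x.ne'
    dsimp only
    rw [smul_eq_mul, abs_of_pos (by positivity)]
    rw [show (1 + x / (1-x)) = (1-x)⁻¹ by field_simp; ring]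
    rw [Real.div_rpow hx0.le h1x.le, inv_inv, Real.rpow_neg h1x.le,
      show a = (a-1)+1 by ring, Real.rpow_add_one hne]
    have hY : ((1:ℝ)-x) ^ (a-1) ≠ 0 := (Real.rpow_pos_of_pos h1x _).ne'
    field_simp
    ring
  rw [hcongr, ← MeasureTheory.integral_Ioc_eq_integral_Ioo,
    ← intervalIntegral.integral_of_le (by norm_num : (0:ℝ) ≤ 1)]
  exact beta_refl ha ha1

theorem laplace_integral (α s : ℝ) (hα : 2 < α) (hs : 0 < s) :
    ∫ r in Set.Ioi (0 : ℝ), 2 * π * r * (1 - 1 / (1 + s * r ^ (-α)))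
      = s ^ (2 / α) * (2 * π ^ 2 * (Real.sin (2 * π / α))⁻¹ / α) := by
  have hα0 : (0:ℝ) < α := by linarith
  set a : ℝ := 2 / α with ha_def
  have ha : 0 < a := by positivity
  have ha1 : a < 1 := by rw [ha_def, div_lt_one hα0]; linarith
  have step1 : (∫ r in Ioi (0:ℝ), 2*π*r*(1 - 1/(1+s*r^(-α))))
      = ∫ x in Ioi (0:ℝ), (α * x^(α-1)) • ((2*π*s/α) * ((x^α)^(a-1) * (s + x^α)⁻¹)) := by
    apply setIntegral_congr_fun measurableSet_Ioi
    intro r hr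
    have hr0 : (0:ℝ) < r := hr
    have hrα : (0:ℝ) < r^α := Real.rpow_pos_of_pos hr0 α
    have hsA : (0:ℝ) < s + r^α := by positivity
    dsimp only
    rw [smul_eq_mul, Real.rpow_neg hr0.le]
    have e0 : 1 - 1/(1+s*(r^α)⁻¹) = s/(s+r^α) := by
      field_simp
      ring
    have e1 : r^(α-1) = r^α / r := by
      rw [Real.rpow_sub hr0, Real.rpow_one]
    have e2 : (r^α)^(a-1) = r^2 / r^α := by
      rw [← Real.rpow_mul hr0.le, show α*(a-1) = 2 - α by rw [ha_def]; field_simp,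
        Real.rpow_sub hr0, show ((2:ℝ)) = ((2:ℕ):ℝ) by norm_num, Real.rpow_natCast]
    rw [e0, e1, e2]
    field_simp
  rw [step1, integral_comp_rpow_Ioi_of_pos hα0
    (g := fun t => (2*π*s/α) * (t^(a-1) * (s + t)⁻¹)),
    MeasureTheory.integral_const_mul]
  have hscale := integral_comp_mul_left_Ioi (fun t => t^(a-1) * (s+t)⁻¹) 0 hs
  rw [mul_zero] at hscale
  simp only [smul_eq_mul] at hscale
  have hcongr2 : (∫ x in Ioi (0:ℝ), (s*x)^(a-1) * (s+s*x)⁻¹)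
      = ∫ x in Ioi (0:ℝ), s^(a-2) * (x^(a-1) * (1+x)⁻¹) := by
    apply setIntegral_congr_fun measurableSet_Ioi
    intro x hx
    have hx0 : (0:ℝ) < x := hx
    have h1x : (0:ℝ) < 1 + x := by linarith
    dsimp only
    rw [Real.mul_rpow hs.le hx0.le,
      show s + s*x = s * (1+x) by ring, mul_inv,
      Real.rpow_sub hs, Real.rpow_sub hs, Real.rpow_one,
      show ((2:ℝ)) = ((2:ℕ):ℝ) by norm_num, Real.rpow_natCast]
    ring
  rw [hcongr2, MeasureTheory.integral_const_mul] at hscale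
  have hJ := J_eval ha ha1
  rw [hJ] at hscale
  have hval : (∫ t in Ioi (0:ℝ), t^(a-1) * (s+t)⁻¹)
      = s * (s^(a-2) * (π / Real.sin (π * a))) := by
    have h2 := congrArg (fun z => s * z) hscale
    rw [← mul_assoc s s⁻¹, mul_inv_cancel₀ hs.ne', one_mul] at h2
    exact h2.symm
  rw [hval]
  have hsin : π * a = 2 * π / α := by rw [ha_def]; ring
  rw [hsin]
  have hsa : s ^ a = s * (s * s^(a-2)) := by
    have h2 : s^(a-2) * s^((2:ℕ):ℝ) = s^a := by
      rw [← Real.rpow_add hs]; norm_num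
    rw [Real.rpow_natCast] at h2
    rw [← h2]; ring
  rw [hsa]
  ring
end

section
/- Let K ≥ 1, and for i = 1,...,K let λ_i, P_i > 0 and T_i > 1. Define P_c = (π/C(α)) · (Σ_{i=1}^K λ_i P_i^{2/α} T_i^{−2/α}) / (Σ_{i=1}^K λ_i P_i^{2/α}), where C(α) = 2π² csc(2π/α)/α and α > 2. If T_i = T for all i, then P_c = π/(C(α) T^{2/α}), independent of K, the λ_i, and the P_i. -/
open Real Finset

theorem coverage_equal_thresholds (K : ℕ) (hK : 1 ≤ K) (α : ℝ) (hα : 2 < α)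
    (lam P T' : Fin K → ℝ) (hlam : ∀ i, 0 < lam i) (hP : ∀ i, 0 < P i)
    (hT1 : ∀ i, 1 < T' i) (T : ℝ) (hT : ∀ i, T' i = T) :
    (π / (2 * π ^ 2 * (Real.sin (2 * π / α))⁻¹ / α)) *
        ((∑ i, lam i * P i ^ (2 / α) * T' i ^ (-(2 / α))) /
          (∑ i, lam i * P i ^ (2 / α)))
      = π / ((2 * π ^ 2 * (Real.sin (2 * π / α))⁻¹ / α) * T ^ (2 / α)) := by
  have i0 : Fin K := ⟨0, hK⟩
  have hT0 : 0 < T := lt_trans one_pos (hT i0 ▸ hT1 i0)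
  have hS : 0 < ∑ i, lam i * P i ^ (2 / α) := by
    apply Finset.sum_pos (fun i _ => mul_pos (hlam i) (rpow_pos_of_pos (hP i) _))
    exact ⟨i0, Finset.mem_univ i0⟩
  have hnum : (∑ i, lam i * P i ^ (2 / α) * T' i ^ (-(2 / α)))
      = (T ^ (2 / α))⁻¹ * ∑ i, lam i * P i ^ (2 / α) := by
    rw [Finset.mul_sum]
    refine Finset.sum_congr rfl fun i _ => ?_
    rw [hT i, rpow_neg hT0.le]
    ring
  rw [hnum, mul_comm, mul_div_assoc, div_self hS.ne', mul_one]
  field_simp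
end

section
/- Fix α > 2, σ² > 0, T > 1, P > 0. The single-tier coverage probability with noise, P_c(λ) = λ ∫_{ℝ²} exp(−C(α) (T/P)^{2/α} λ P^{2/α} ‖x‖²) · exp(−(Tσ²/P) ‖x‖^α) dx, satisfies P_c(λ) < π/(C(α) T^{2/α}) for all λ > 0, and P_c(λ) → π/(C(α) T^{2/α}) as λ → ∞. -/
open MeasureTheory Real

local notation "E2" => EuclideanSpace ℝ (Fin 2)

lemma aux_gauss_integrable {a : ℝ} (ha : 0 < a) :
    Integrable (fun x : EuclideanSpace ℝ (Fin 2) => rexp (-(a * ‖x‖ ^ 2))) := by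
  have h := (GaussianFourier.integrable_cexp_neg_mul_sq_norm_add (b := (a : ℂ))
      (by simpa using ha) 0 (0 : EuclideanSpace ℝ (Fin 2))).norm
  refine h.congr (Filter.Eventually.of_forall fun x => ?_)
  simp [Complex.norm_exp, neg_mul]
  norm_cast
  exact Or.inl rfl

lemma aux_gauss_integral {a : ℝ} (ha : 0 < a) :
    ∫ x : EuclideanSpace ℝ (Fin 2), rexp (-(a * ‖x‖ ^ 2)) = π / a := by
  have h := GaussianFourier.integral_rexp_neg_mul_sq_norm (V := EuclideanSpace ℝ (Fin 2)) ha
  simp only [finrank_euclideanSpace_fin, neg_mul] at h ⊢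
  rw [h]
  norm_num

lemma aux_cont {α : ℝ} (hα : 0 ≤ α) (a t : ℝ) :
    Continuous (fun x : EuclideanSpace ℝ (Fin 2) =>
      rexp (-(a * ‖x‖ ^ 2)) * rexp (-(t * ‖x‖ ^ α))) := by
  have h1 : Continuous fun x : EuclideanSpace ℝ (Fin 2) => ‖x‖ ^ α :=
    continuous_norm.rpow_const (fun x => Or.inr hα)
  exact ((Real.continuous_exp.comp ((continuous_const.mul (continuous_norm.pow 2)).neg)).mul
    (Real.continuous_exp.comp ((continuous_const.mul h1).neg)))

lemma aux_prod_integrable {α : ℝ} (hα : 0 ≤ α) {a : ℝ} (ha : 0 < a) {t : ℝ} (ht : 0 ≤ t) :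
    Integrable (fun x : EuclideanSpace ℝ (Fin 2) =>
      rexp (-(a * ‖x‖ ^ 2)) * rexp (-(t * ‖x‖ ^ α))) := by
  refine (aux_gauss_integrable ha).mono (aux_cont hα a t).aestronglyMeasurable
    (Filter.Eventually.of_forall fun x => ?_)
  rw [Real.norm_eq_abs, Real.norm_eq_abs, abs_of_pos (by positivity), abs_of_pos (by positivity)]
  nth_rewrite 2 [← mul_one (rexp (-(a * ‖x‖ ^ 2)))]
  refine mul_le_mul_of_nonneg_left ?_ (Real.exp_pos _).le
  rw [Real.exp_le_one_iff]
  have : 0 ≤ t * ‖x‖ ^ α := mul_nonneg ht (Real.rpow_nonneg (norm_nonneg x) α)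
  linarith

theorem single_tier_coverage_with_noise (α σ2 T P : ℝ)
    (hα : 2 < α) (hσ : 0 < σ2) (hT : 1 < T) (hP : 0 < P)
    (Pc : ℝ → ℝ)
    (hPc : ∀ lam : ℝ, Pc lam = lam *
      ∫ x : EuclideanSpace ℝ (Fin 2),
        Real.exp (-((2 * π ^ 2 * (Real.sin (2 * π / α))⁻¹ / α) *
            (T / P) ^ (2 / α) * lam * P ^ (2 / α) * ‖x‖ ^ 2)) *
          Real.exp (-(T * σ2 / P * ‖x‖ ^ α))) :
    (∀ lam : ℝ, 0 < lam →
      Pc lam < π / ((2 * π ^ 2 * (Real.sin (2 * π / α))⁻¹ / α) * T ^ (2 / α))) ∧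
    Filter.Tendsto Pc Filter.atTop
      (nhds (π / ((2 * π ^ 2 * (Real.sin (2 * π / α))⁻¹ / α) * T ^ (2 / α)))) := by
  have hα0 : 0 < α := by linarith
  have hT0 : 0 < T := by linarith
  set C := 2 * π ^ 2 * (Real.sin (2 * π / α))⁻¹ / α with hCdef
  have hsin : 0 < Real.sin (2 * π / α) := by
    apply Real.sin_pos_of_pos_of_lt_pi
    · positivity
    · rw [div_lt_iff₀ hα0]; nlinarith [Real.pi_pos]
  have hC : 0 < C := by
    rw [hCdef]
    exact div_pos (mul_pos (by positivity) (inv_pos.2 hsin)) hα0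
  set c := T * σ2 / P with hcdef
  have hc : 0 < c := by positivity
  set b := C * T ^ (2 / α) with hbdef
  have hb : 0 < b := by
    have := Real.rpow_pos_of_pos hT0 (2 / α); positivity
  have hcoef : ∀ lam : ℝ, C * (T / P) ^ (2 / α) * lam * P ^ (2 / α) = b * lam := by
    intro lam
    rw [hbdef, Real.div_rpow hT0.le hP.le]
    have hPne : P ^ (2 / α) ≠ 0 := (Real.rpow_pos_of_pos hP _).ne'
    field_simp
  have hPc' : ∀ lam : ℝ, Pc lam = lam *
      ∫ x : EuclideanSpace ℝ (Fin 2),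
        rexp (-(b * lam * ‖x‖ ^ 2)) * rexp (-(c * ‖x‖ ^ α)) := by
    intro lam
    rw [hPc lam]
    congr 1
    congr 1
    funext x
    rw [hcoef lam]
  constructor
  · intro lam hlam
    rw [hPc' lam]
    have halam : 0 < b * lam := mul_pos hb hlam
    have hIg := aux_gauss_integrable halam
    have hIf := aux_prod_integrable (by linarith : (0:ℝ) ≤ α) halam hc.le
    have hstrict : (∫ x : EuclideanSpace ℝ (Fin 2),
        rexp (-(b * lam * ‖x‖ ^ 2)) * rexp (-(c * ‖x‖ ^ α)))
        < ∫ x : EuclideanSpace ℝ (Fin 2), rexp (-(b * lam * ‖x‖ ^ 2)) := by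
      have hdiff : Integrable (fun x : EuclideanSpace ℝ (Fin 2) =>
          rexp (-(b * lam * ‖x‖ ^ 2)) - rexp (-(b * lam * ‖x‖ ^ 2)) * rexp (-(c * ‖x‖ ^ α))) :=
        hIg.sub hIf
      have hnonneg : ∀ x : EuclideanSpace ℝ (Fin 2), 0 ≤
          rexp (-(b * lam * ‖x‖ ^ 2)) - rexp (-(b * lam * ‖x‖ ^ 2)) * rexp (-(c * ‖x‖ ^ α)) := by
        intro x
        have h1 : rexp (-(c * ‖x‖ ^ α)) ≤ 1 := by
          rw [Real.exp_le_one_iff]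
          have : 0 ≤ c * ‖x‖ ^ α := mul_nonneg hc.le (Real.rpow_nonneg (norm_nonneg x) α)
          linarith
        nlinarith [Real.exp_pos (-(b * lam * ‖x‖ ^ 2))]
      have hpos : 0 < ∫ x : EuclideanSpace ℝ (Fin 2),
          (rexp (-(b * lam * ‖x‖ ^ 2)) - rexp (-(b * lam * ‖x‖ ^ 2)) * rexp (-(c * ‖x‖ ^ α))) := by
        rw [integral_pos_iff_support_of_nonneg hnonneg hdiff]
        have hsub : ({(0 : EuclideanSpace ℝ (Fin 2))}ᶜ : Set _) ⊆ Function.support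
            (fun x : EuclideanSpace ℝ (Fin 2) =>
              rexp (-(b * lam * ‖x‖ ^ 2)) - rexp (-(b * lam * ‖x‖ ^ 2)) * rexp (-(c * ‖x‖ ^ α))) := by
          intro x hx
          have hxne : x ≠ 0 := hx
          have hxn : 0 < ‖x‖ := norm_pos_iff.2 hxne
          have h2 : rexp (-(c * ‖x‖ ^ α)) < 1 := by
            rw [Real.exp_lt_one_iff]
            have : 0 < c * ‖x‖ ^ α := mul_pos hc (Real.rpow_pos_of_pos hxn α)
            linarith
          have := Real.exp_pos (-(b * lam * ‖x‖ ^ 2))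
          simp only [Function.mem_support]
          nlinarith
        have h0 : 0 < (volume : Measure (EuclideanSpace ℝ (Fin 2))) {(0 : EuclideanSpace ℝ (Fin 2))}ᶜ := by
          rw [pos_iff_ne_zero]
          intro h
          have huniv : (volume : Measure (EuclideanSpace ℝ (Fin 2))) Set.univ = 0 := by
            have hle := measure_union_le (μ := (volume : Measure (EuclideanSpace ℝ (Fin 2))))
              {(0 : EuclideanSpace ℝ (Fin 2))} {(0 : EuclideanSpace ℝ (Fin 2))}ᶜ
            rw [Set.union_compl_self] at hle
            simpa [h, measure_singleton] using hle
          exact absurd huniv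
            (isOpen_univ.measure_pos (volume : Measure (EuclideanSpace ℝ (Fin 2)))
              ⟨0, trivial⟩).ne'
        exact lt_of_lt_of_le h0 (measure_mono hsub)
      rw [integral_sub hIg hIf] at hpos
      linarith
    calc lam * ∫ x : EuclideanSpace ℝ (Fin 2),
          rexp (-(b * lam * ‖x‖ ^ 2)) * rexp (-(c * ‖x‖ ^ α))
        < lam * ∫ x : EuclideanSpace ℝ (Fin 2), rexp (-(b * lam * ‖x‖ ^ 2)) :=
          mul_lt_mul_of_pos_left hstrict hlam
      _ = π / b := by
          rw [aux_gauss_integral halam]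
          field_simp
  · have h2a : (0:ℝ) < α / 2 := by linarith
    have hαnn : (0:ℝ) ≤ α := hα0.le
    set t : ℝ → ℝ := fun lam => lam ^ (-(α / 2)) with htdef
    have hev : ∀ᶠ lam in Filter.atTop, Pc lam =
        ∫ x : EuclideanSpace ℝ (Fin 2),
          rexp (-(b * ‖x‖ ^ 2)) * rexp (-(t lam * c * ‖x‖ ^ α)) := by
      filter_upwards [Filter.eventually_gt_atTop 0] with lam hlam
      rw [hPc' lam]
      set R : ℝ := lam ^ (-(1/2 : ℝ)) with hR
      have hRpos : 0 < R := Real.rpow_pos_of_pos hlam _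
      have key := MeasureTheory.Measure.integral_comp_smul_of_nonneg
        (volume : Measure (EuclideanSpace ℝ (Fin 2)))
        (fun x : EuclideanSpace ℝ (Fin 2) =>
          rexp (-(b * lam * ‖x‖ ^ 2)) * rexp (-(c * ‖x‖ ^ α))) R (hR := hRpos.le)
      simp only [finrank_euclideanSpace_fin] at key
      have hR2 : (R ^ (2:ℕ))⁻¹ = lam := by
        rw [hR, ← Real.rpow_natCast (lam ^ (-(1/2:ℝ))) 2, ← Real.rpow_mul hlam.le]
        norm_num
        rw [Real.rpow_neg_one, inv_inv]
      rw [hR2, smul_eq_mul] at key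
      rw [← key]
      congr 1
      funext x
      have hnorm : ‖R • x‖ = R * ‖x‖ := by
        rw [norm_smul, Real.norm_eq_abs, abs_of_pos hRpos]
      have hRa : R ^ α = t lam := by
        rw [hR, htdef, ← Real.rpow_mul hlam.le]
        congr 1
        ring
      have hR2' : R ^ 2 * lam = 1 := by
        rw [← hR2]; field_simp
      rw [hnorm]
      congr 1
      · congr 1
        rw [mul_pow]
        linear_combination (-(b * ‖x‖ ^ 2)) * hR2'
      · congr 1
        rw [Real.mul_rpow hRpos.le (norm_nonneg x), hRa]
        ring
    refine Filter.Tendsto.congr' (Filter.EventuallyEq.symm hev) ?_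
    have hval : π / b = ∫ x : EuclideanSpace ℝ (Fin 2), rexp (-(b * ‖x‖ ^ 2)) :=
      (aux_gauss_integral hb).symm
    rw [hval]
    apply MeasureTheory.tendsto_integral_filter_of_dominated_convergence
      (bound := fun x : EuclideanSpace ℝ (Fin 2) => rexp (-(b * ‖x‖ ^ 2)))
    · exact Filter.Eventually.of_forall fun lam =>
        (aux_cont hαnn b (t lam * c)).aestronglyMeasurable
    · filter_upwards [Filter.eventually_ge_atTop 0] with lam hlam
      refine Filter.Eventually.of_forall fun x => ?_
      have htn : 0 ≤ t lam := Real.rpow_nonneg hlam _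
      rw [Real.norm_eq_abs, abs_of_pos (by positivity)]
      refine mul_le_of_le_one_right (Real.exp_pos _).le ?_
      rw [Real.exp_le_one_iff]
      have : 0 ≤ t lam * c * ‖x‖ ^ α := by positivity
      linarith
    · exact aux_gauss_integrable hb
    · refine Filter.Eventually.of_forall fun x => ?_
      have ht0 : Filter.Tendsto t Filter.atTop (nhds 0) := tendsto_rpow_neg_atTop h2a
      have harg : Filter.Tendsto (fun lam => -(t lam * c * ‖x‖ ^ α)) Filter.atTop (nhds 0) := by
        have := ((ht0.mul_const c).mul_const (‖x‖ ^ α)).neg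
        simpa using this
      have hexp : Filter.Tendsto (fun lam => rexp (-(t lam * c * ‖x‖ ^ α)))
          Filter.atTop (nhds 1) := by
        have := (Real.continuous_exp.tendsto 0).comp harg
        simpa [Function.comp_def] using this
      simpa using hexp.const_mul (rexp (-(b * ‖x‖ ^ 2)))
end

section
/- Let α > 2, T ≥ 1. Then the function T ↦ log(1+T) + T^{2/α} ∫_T^∞ x^{−2/α}/(1+x) dx is strictly increasing in T on [1, ∞). -/
open MeasureTheory Real

lemma g_integrable {δ : ℝ} (hδ0 : 0 < δ) (S : ℝ) (hS : 0 < S) :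
    IntegrableOn (fun x : ℝ => x ^ (-δ) / (1 + x)) (Set.Ioi S) := by
  have hcont : ContinuousOn (fun x : ℝ => x ^ (-δ) / (1 + x)) (Set.Ioi S) := by
    refine ContinuousOn.div (continuousOn_id.rpow_const ?_) (by fun_prop) ?_
    · intro x hx; exact Or.inl (ne_of_gt (lt_trans hS hx))
    · intro x hx
      have : S < x := hx
      intro h; linarith
  have hbig : IntegrableOn (fun x : ℝ => x ^ (-δ - 1)) (Set.Ioi S) :=
    integrableOn_Ioi_rpow_of_lt (by linarith) hS
  refine hbig.integrable.mono' (hcont.aestronglyMeasurable measurableSet_Ioi) ?_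
  rw [MeasureTheory.ae_restrict_iff' measurableSet_Ioi]
  filter_upwards with x hx
  have hx0 : 0 < x := lt_trans hS hx
  have h1x : 0 < 1 + x := by linarith
  have hnn : 0 ≤ x ^ (-δ) / (1 + x) := div_nonneg (Real.rpow_nonneg hx0.le _) h1x.le
  rw [Real.norm_eq_abs, abs_of_nonneg hnn]
  have : x ^ (-δ) / (1 + x) ≤ x ^ (-δ) / x :=
    div_le_div_of_nonneg_left (Real.rpow_nonneg hx0.le _) hx0 (by linarith)
  refine this.trans_eq ?_
  rw [div_eq_mul_inv, ← Real.rpow_neg_one x, ← Real.rpow_add hx0]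
  ring_nf

lemma tail_pos {δ : ℝ} (hδ0 : 0 < δ) (T : ℝ) (hT : 0 < T) :
    0 < ∫ x in Set.Ioi T, x ^ (-δ) / (1 + x) := by
  have hI := g_integrable hδ0 T hT
  have hnn : 0 ≤ᵐ[volume.restrict (Set.Ioi T)] fun x : ℝ => x ^ (-δ) / (1 + x) := by
    rw [Filter.EventuallyLE, MeasureTheory.ae_restrict_iff' measurableSet_Ioi]
    filter_upwards with x hx
    have hx0 : 0 < x := lt_trans hT hx
    exact div_nonneg (Real.rpow_nonneg hx0.le _) (by linarith)
  rw [MeasureTheory.setIntegral_pos_iff_support_of_nonneg_ae hnn hI]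
  have hsub : Set.Ioi T ⊆ Function.support (fun x : ℝ => x ^ (-δ) / (1 + x)) ∩ Set.Ioi T := by
    intro x hx
    have hx0 : 0 < x := lt_trans hT hx
    refine ⟨?_, hx⟩
    simp only [Function.mem_support]
    exact ne_of_gt (div_pos (Real.rpow_pos_of_pos hx0 _) (by linarith))
  calc (0 : ENNReal) < volume (Set.Ioi T) := by simp
    _ ≤ _ := measure_mono hsub

theorem average_rate_monotone (α : ℝ) (hα : 2 < α) :
    StrictMonoOn
      (fun T : ℝ => Real.log (1 + T) +
        T ^ (2 / α) * ∫ x in Set.Ioi T, x ^ (-(2 / α)) / (1 + x))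
      (Set.Ici 1) := by
  intro S hS T hT hST
  simp only [Set.mem_Ici] at hS hT
  set δ := 2 / α with hδdef
  have hα0 : 0 < α := by linarith
  have hδ0 : 0 < δ := by positivity
  have hS0 : 0 < S := by linarith
  have hT0 : 0 < T := by linarith
  have hIT := g_integrable hδ0 T hT0
  have hIS := g_integrable hδ0 S hS0
  have hIoc : IntegrableOn (fun x : ℝ => x ^ (-δ) / (1 + x)) (Set.Ioc S T) :=
    hIS.mono_set Set.Ioc_subset_Ioi_self
  have hsplit : (∫ x in Set.Ioi S, x ^ (-δ) / (1 + x))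
      = (∫ x in Set.Ioc S T, x ^ (-δ) / (1 + x)) + ∫ x in Set.Ioi T, x ^ (-δ) / (1 + x) := by
    rw [← MeasureTheory.setIntegral_union (Set.Ioc_disjoint_Ioi le_rfl) measurableSet_Ioi
      hIoc hIT, Set.Ioc_union_Ioi_eq_Ioi hST.le]
  have hlog : Real.log (1 + T) - Real.log (1 + S) = ∫ x in Set.Ioc S T, (1 + x)⁻¹ := by
    rw [← intervalIntegral.integral_of_le hST.le]
    have h1 : (∫ x in S..T, (1 + x)⁻¹) = ∫ x in (S + 1)..(T + 1), x⁻¹ := by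
      rw [← intervalIntegral.integral_comp_add_right (fun x => x⁻¹) 1]
      simp [add_comm]
    rw [h1, integral_inv]
    · rw [Real.log_div (by linarith) (by linarith)]
      ring_nf
    · intro h
      rcases Set.mem_uIcc.1 h with ⟨h1, _⟩ | ⟨h1, _⟩ <;> linarith
  have hcomp : S ^ δ * ∫ x in Set.Ioc S T, x ^ (-δ) / (1 + x)
      ≤ ∫ x in Set.Ioc S T, (1 + x)⁻¹ := by
    rw [← MeasureTheory.integral_const_mul]
    refine MeasureTheory.setIntegral_mono_on (hIoc.const_mul _) ?_ measurableSet_Ioc ?_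
    · refine (ContinuousOn.integrableOn_Icc ?_).mono_set Set.Ioc_subset_Icc_self
      refine ContinuousOn.inv₀ (by fun_prop) fun x hx => ?_
      have := hx.1
      intro h; linarith [hx.1]
    · intro x hx
      have hSx : S ≤ x := hx.1.le
      have hx0 : 0 < x := lt_of_lt_of_le hS0 hSx
      have h1x : 0 < 1 + x := by linarith
      have hle : S ^ δ * x ^ (-δ) ≤ 1 := by
        rw [Real.rpow_neg hx0.le, mul_inv_le_iff₀ (Real.rpow_pos_of_pos hx0 _), one_mul]
        exact Real.rpow_le_rpow hS0.le hSx hδ0.le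
      rw [mul_div_assoc', ← one_div, div_le_div_iff₀ h1x h1x]
      nlinarith
  have hpow : S ^ δ < T ^ δ := Real.rpow_lt_rpow hS0.le hST hδ0
  have htail := tail_pos hδ0 T hT0
  simp only
  rw [hsplit]
  have h1 : S ^ δ * ((∫ x in Set.Ioc S T, x ^ (-δ) / (1 + x))
      + ∫ x in Set.Ioi T, x ^ (-δ) / (1 + x))
      = S ^ δ * (∫ x in Set.Ioc S T, x ^ (-δ) / (1 + x))
      + S ^ δ * ∫ x in Set.Ioi T, x ^ (-δ) / (1 + x) := by ring
  rw [h1]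
  have h2 : S ^ δ * (∫ x in Set.Ioi T, x ^ (-δ) / (1 + x))
      < T ^ δ * ∫ x in Set.Ioi T, x ^ (-δ) / (1 + x) :=
    mul_lt_mul_of_pos_right hpow htail
  linarith [hcomp, hlog, h2]
end
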